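/- Let u, y : ℝ → ℤ → ℂ be functions differentiable in x, let α, β, γ ∈ ℂ, and suppose that for all n ∈ ℤ the flows ∂ₓuₙ = uₙ(uₙ₊₁ − uₙ₋₁) and ∂ₓyₙ = uₙ(yₙ₊₁ − yₙ₋₁) hold, and that yₙ + yₙ₋₁ ≠ 0 for all n. Define Fₙ = uₙ(yₙ₊₁ + yₙ)(yₙ + yₙ₋₁) − αyₙ² − (−1)ⁿβyₙ − γ and Gₙ = (Fₙ − Fₙ₋₁)/(yₙ + yₙ₋₁). Then for all n: ∂ₓFₙ = uₙ(yₙ + yₙ₋₁)Gₙ₊₁ + uₙ(yₙ₊₁ + yₙ)Gₙ. In particular, if Fₙ = 0 for all n at every point, then ∂ₓFₙ = 0. -/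

import Mathlib

/-- consistency of the negative-symmetry constraint of the Volterra
lattice with the `x`-flow `∂ₓuₙ = uₙ(uₙ₊₁ − uₙ₋₁)`, `∂ₓyₙ = uₙ(yₙ₊₁ − yₙ₋₁)`. -/
theorem volterra_constraint_x_flow
    (u y : ℝ → ℤ → ℂ) (α β γ : ℂ)
    (hu : ∀ (x : ℝ) (n : ℤ), HasDerivAt (fun x => u x n)
      (u x n * (u x (n + 1) - u x (n - 1))) x)
    (hy : ∀ (x : ℝ) (n : ℤ), HasDerivAt (fun x => y x n)
      (u x n * (y x (n + 1) - y x (n - 1))) x)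
    (hden : ∀ (x : ℝ) (n : ℤ), y x n + y x (n - 1) ≠ 0)
    (F G : ℝ → ℤ → ℂ)
    (hF : ∀ (x : ℝ) (n : ℤ), F x n =
      u x n * (y x (n + 1) + y x n) * (y x n + y x (n - 1))
        - α * (y x n) ^ 2 - (-1 : ℂ) ^ n * β * y x n - γ)
    (hG : ∀ (x : ℝ) (n : ℤ), G x n = (F x n - F x (n - 1)) / (y x n + y x (n - 1))) :
    (∀ (x : ℝ) (n : ℤ), HasDerivAt (fun x => F x n)
      (u x n * (y x n + y x (n - 1)) * G x (n + 1)
        + u x n * (y x (n + 1) + y x n) * G x n) x)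
    ∧ ((∀ (x : ℝ) (n : ℤ), F x n = 0) →
        ∀ (x : ℝ) (n : ℤ), HasDerivAt (fun x => F x n) 0 x) := by
  have main : ∀ (x : ℝ) (n : ℤ), HasDerivAt (fun x => F x n)
      (u x n * (y x n + y x (n - 1)) * G x (n + 1)
        + u x n * (y x (n + 1) + y x n) * G x n) x := by
    intro x n
    have h1 := hu x n
    have h2 := hy x (n + 1)
    have h3 := hy x n
    have h4 := hy x (n - 1)
    simp only [show (n : ℤ) + 1 + 1 = n + 2 from by ring,
      show (n : ℤ) + 1 - 1 = n from by ring,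
      show (n : ℤ) - 1 + 1 = n from by ring,
      show (n : ℤ) - 1 - 1 = n - 2 from by ring] at h2 h4
    have Hsq : HasDerivAt (fun x => y x n ^ 2)
        (2 * y x n * (u x n * (y x (n + 1) - y x (n - 1)))) x := by
      convert (show HasDerivAt (fun x => y x n * y x n) _ x from h3.fun_mul h3) using 1
      · funext t; ring
      · ring
    have Ha : HasDerivAt (fun x => α * y x n ^ 2)
        (α * (2 * y x n * (u x n * (y x (n + 1) - y x (n - 1))))) x := Hsq.const_mul α
    have Hb : HasDerivAt (fun x => (-1 : ℂ) ^ n * β * y x n)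
        ((-1 : ℂ) ^ n * β * (u x n * (y x (n + 1) - y x (n - 1)))) x :=
      h3.const_mul ((-1 : ℂ) ^ n * β)
    have H := ((((h1.fun_mul (h2.fun_add h3)).fun_mul (h3.fun_add h4)).fun_sub Ha).fun_sub Hb).sub_const γ
    rw [show (fun x => u x n * (y x (n + 1) + y x n) * (y x n + y x (n - 1))
        - α * y x n ^ 2 - (-1 : ℂ) ^ n * β * y x n - γ) = fun x => F x n from
      funext fun x => (hF x n).symm] at H
    convert (show HasDerivAt (fun x => F x n) _ x from H) using 1
    have hd1 := hden x (n + 1)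
    have hd2 := hden x n
    simp only [show (n : ℤ) + 1 - 1 = n from by ring] at hd1
    rw [hG x (n + 1), hG x n]
    simp only [show (n : ℤ) + 1 - 1 = n from by ring]
    simp only [hF x (n + 1), hF x n, hF x (n - 1)]
    simp only [show (n : ℤ) + 1 + 1 = n + 2 from by ring,
      show (n : ℤ) + 1 - 1 = n from by ring,
      show (n : ℤ) - 1 + 1 = n from by ring,
      show (n : ℤ) - 1 - 1 = n - 2 from by ring,
      show (-1 : ℂ) ^ (n + 1) = -(-1 : ℂ) ^ n from by
        rw [zpow_add_one₀ (by norm_num)]; ring,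
      show (-1 : ℂ) ^ (n - 1) = -(-1 : ℂ) ^ n from by
        rw [zpow_sub_one₀ (by norm_num : (-1 : ℂ) ≠ 0)]; norm_num]
    field_simp
    ring
  refine ⟨main, fun h0 x n => ?_⟩
  have H := main x n
  convert H using 1
  simp [hG, h0]
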